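/- For every point (x,y,z) ∈ ℂ³ lying on the zero locus of F (i.e. F(x,y,z) = 0), the gradient of F at (x,y,z) is nonzero: at least one of the partial derivatives ∂F/∂x, ∂F/∂y, ∂F/∂z does not vanish at (x,y,z). Consequently the affine surface S_{s,[m][p]} ⊂ ℂ³ is smooth. -/

import Mathlib

/-- For every point on the zero locus of the polynomial
`F(x,y,z) = (∏ (x−rᵢ)^{mᵢ})·z − Σᵢ (∏_{j≠i}(x−rⱼ))·y^{pᵢ} − ∏ (x−rᵢ)`,
at least one of the three partial derivatives of `F` does not vanish;
consequently the affine surface `S_{s,[m][p]} ⊂ ℂ³` is smooth. -/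
theorem fake_plane_negKodaira_hypersurface_smooth
    (s : ℕ) (hs : 1 ≤ s)
    (m : Fin s → ℕ) (hm : ∀ i, 2 ≤ m i)
    (p : Fin s → ℕ) (hpodd : ∀ i, Odd (p i)) (hp3 : ∀ i, 3 ≤ p i)
    (r : Fin s → ℝ) (hr : Function.Injective r)
    (F : ℂ → ℂ → ℂ → ℂ)
    (hF : ∀ x y z : ℂ, F x y z =
      (∏ i, (x - (r i : ℂ)) ^ m i) * z
        - (∑ i, (∏ j ∈ Finset.univ.erase i, (x - (r j : ℂ))) * y ^ p i)
        - ∏ i, (x - (r i : ℂ))) :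
    ∀ x y z : ℂ, F x y z = 0 →
      deriv (fun t => F t y z) x ≠ 0 ∨ deriv (fun t => F x t z) y ≠ 0 ∨
        deriv (fun t => F x y t) z ≠ 0 := by
  intro x y z hfz
  by_cases hA : (∏ i, (x - (r i : ℂ)) ^ m i) = 0
  · -- x = r k for some k
    obtain ⟨k, -, hk⟩ := Finset.prod_eq_zero_iff.mp hA
    have hmk0 : m k ≠ 0 := by have := hm k; omega
    have hxk : x = (r k : ℂ) :=
      sub_eq_zero.mp (pow_eq_zero_iff hmk0 |>.mp hk)
    subst hxk
    have hB : (∏ j ∈ Finset.univ.erase k, ((r k : ℂ) - (r j : ℂ))) ≠ 0 := by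
      rw [Finset.prod_ne_zero_iff]
      intro j hj
      have hjk : j ≠ k := (Finset.mem_erase.mp hj).1
      rw [sub_ne_zero]
      intro h
      exact hjk (hr (Complex.ofReal_inj.mp h)).symm
    -- from the equation F = 0, deduce y = 0
    have hy : y = 0 := by
      rw [hF] at hfz
      have hC : (∏ i, ((r k : ℂ) - (r i : ℂ))) = 0 :=
        Finset.prod_eq_zero (Finset.mem_univ k) (by ring)
      have hsum : (∑ i, (∏ j ∈ Finset.univ.erase i, ((r k : ℂ) - (r j : ℂ))) * y ^ p i)
          = (∏ j ∈ Finset.univ.erase k, ((r k : ℂ) - (r j : ℂ))) * y ^ p k := by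
        refine Finset.sum_eq_single_of_mem k (Finset.mem_univ k) ?_
        intro i _ hik
        have h0 : (∏ j ∈ Finset.univ.erase i, ((r k : ℂ) - (r j : ℂ))) = 0 :=
          Finset.prod_eq_zero (Finset.mem_erase.mpr ⟨hik.symm, Finset.mem_univ k⟩) (by ring)
        rw [h0, zero_mul]
      rw [hA, hC, hsum, zero_mul, zero_sub, sub_zero, neg_eq_zero] at hfz
      have := (mul_eq_zero.mp hfz).resolve_left hB
      exact pow_eq_zero_iff (show p k ≠ 0 by have := hp3 k; omega) |>.mp this
    subst hy
    left
    set c : ℂ := (r k : ℂ) with hc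
    have heq : (fun t => F t 0 z) = (fun t : ℂ =>
        ((t - c) ^ m k * ∏ i ∈ Finset.univ.erase k, (t - (r i : ℂ)) ^ m i) * z
          - (t - c) * ∏ j ∈ Finset.univ.erase k, (t - (r j : ℂ))) := by
      funext t
      rw [hF]
      rw [Finset.sum_eq_zero (fun i _ => by
        rw [zero_pow (show p i ≠ 0 by have := hp3 i; omega), mul_zero])]
      rw [← Finset.mul_prod_erase Finset.univ (fun i => (t - (r i : ℂ)) ^ m i)
        (Finset.mem_univ k),
        ← Finset.mul_prod_erase Finset.univ (fun i => (t - (r i : ℂ))) (Finset.mem_univ k)]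
      ring
    have hQ : DifferentiableAt ℂ (fun t => ∏ i ∈ Finset.univ.erase k, (t - (r i : ℂ)) ^ m i) c :=
      DifferentiableAt.fun_finsetProd fun i _ => (differentiableAt_id.sub_const _).pow _
    have hBd : DifferentiableAt ℂ (fun t => ∏ j ∈ Finset.univ.erase k, (t - (r j : ℂ))) c :=
      DifferentiableAt.fun_finsetProd fun i _ => differentiableAt_id.sub_const _
    have h1 : HasDerivAt (fun t : ℂ => (t - c) ^ m k) 0 c := by
      have := ((hasDerivAt_id c).sub_const c).fun_pow (m k)
      simpa [sub_self, zero_pow (show m k - 1 ≠ 0 by have := hm k; omega)] using this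
    have hAd : HasDerivAt (fun t : ℂ =>
        (t - c) ^ m k * ∏ i ∈ Finset.univ.erase k, (t - (r i : ℂ)) ^ m i) 0 c := by
      have := h1.fun_mul hQ.hasDerivAt
      simpa [sub_self, zero_pow hmk0] using this
    have hCd : HasDerivAt (fun t : ℂ =>
        (t - c) * ∏ j ∈ Finset.univ.erase k, (t - (r j : ℂ)))
        (∏ j ∈ Finset.univ.erase k, ((r k : ℂ) - (r j : ℂ))) c := by
      have := ((hasDerivAt_id c).sub_const c).fun_mul hBd.hasDerivAt
      simpa [sub_self] using this
    have hG := (hAd.mul_const z).fun_sub hCd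
    rw [heq, hG.deriv]
    simpa using hB
  · right; right
    have heq : (fun t => F x y t) = (fun t : ℂ =>
        (∏ i, (x - (r i : ℂ)) ^ m i) * t
          - (∑ i, (∏ j ∈ Finset.univ.erase i, (x - (r j : ℂ))) * y ^ p i)
          - ∏ i, (x - (r i : ℂ))) := funext fun t => hF x y t
    have h1 : HasDerivAt (fun t : ℂ =>
        (∏ i, (x - (r i : ℂ)) ^ m i) * t
          - (∑ i, (∏ j ∈ Finset.univ.erase i, (x - (r j : ℂ))) * y ^ p i)
          - ∏ i, (x - (r i : ℂ))) (∏ i, (x - (r i : ℂ)) ^ m i) z := by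
      simpa using (((hasDerivAt_id z).const_mul (∏ i, (x - (r i : ℂ)) ^ m i)).sub_const
        (∑ i, (∏ j ∈ Finset.univ.erase i, (x - (r j : ℂ))) * y ^ p i)).sub_const
          (∏ i, (x - (r i : ℂ)))
    rw [heq, h1.deriv]; exact hA
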